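/- Let Y be an M-ideal in a Banach space X (so X* = Y^⊥ ⊕_1 Z with Z isometric to Y*). If y* ∈ S(Y*) is a w*-w point of continuity of Y*_1, then, regarded as an element of S(X*) via the isometric identification, y* is a w*-w point of continuity of X*_1. -/

import Mathlib

open NormedSpace Filter Topology

/-- `x*` in the dual unit ball is a *w\*-w point of continuity*: every net (filter) in the
dual unit ball converging weak\* to `x*` converges weakly to `x*`. -/
def IsWStarWPC {E : Type*} [NormedAddCommGroup E] [NormedSpace ℝ E]
    (x : StrongDual ℝ E) : Prop :=
  ∀ l : Filter (StrongDual ℝ E), l.NeBot → (∀ᶠ φ in l, ‖φ‖ ≤ 1) →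
    (∀ v : E, Tendsto (fun φ : StrongDual ℝ E => φ v) l (𝓝 (x v))) →
    ∀ Λ : StrongDual ℝ (StrongDual ℝ E), Tendsto (fun φ : StrongDual ℝ E => Λ φ) l (𝓝 (Λ x))


section Aux

variable {X : Type*} [NormedAddCommGroup X] [NormedSpace ℝ X]
  (Y : Submodule ℝ X) (P : StrongDual ℝ X →L[ℝ] StrongDual ℝ X)

/-- Extension map `Y* → X*` through `P`. -/
noncomputable def MIdealExt : StrongDual ℝ Y → StrongDual ℝ X :=
  fun ψ => P (exists_extension_norm_eq Y ψ).choose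

theorem MIdealExt_eq
    (hPcongr : ∀ f g : StrongDual ℝ X, (∀ y ∈ Y, f y = g y) → P f = P g)
    (ψ : StrongDual ℝ Y) (g : StrongDual ℝ X) (hg : ∀ y : Y, g y = ψ y) :
    MIdealExt Y P ψ = P g := by
  refine hPcongr _ _ ?_
  intro y hy
  exact ((exists_extension_norm_eq Y ψ).choose_spec.1 ⟨y, hy⟩).trans (hg ⟨y, hy⟩).symm

/-- The extension map as a continuous linear map. -/
noncomputable def MIdealExtL
    (hPcongr : ∀ f g : StrongDual ℝ X, (∀ y ∈ Y, f y = g y) → P f = P g)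
    (hPle : ∀ f : StrongDual ℝ X, ‖P f‖ ≤ ‖f‖) :
    StrongDual ℝ Y →L[ℝ] StrongDual ℝ X :=
  LinearMap.mkContinuous
    { toFun := MIdealExt Y P
      map_add' := by
        intro ψ1 ψ2
        show MIdealExt Y P (ψ1 + ψ2) = MIdealExt Y P ψ1 + MIdealExt Y P ψ2
        rw [MIdealExt_eq Y P hPcongr (ψ1 + ψ2)
            ((exists_extension_norm_eq Y ψ1).choose
              + (exists_extension_norm_eq Y ψ2).choose)
            (fun y => by
              rw [ContinuousLinearMap.add_apply,
                (exists_extension_norm_eq Y ψ1).choose_spec.1 y,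
                (exists_extension_norm_eq Y ψ2).choose_spec.1 y,
                ContinuousLinearMap.add_apply]),
          map_add]
        rfl
      map_smul' := by
        intro c ψ
        show MIdealExt Y P (c • ψ) = (RingHom.id ℝ) c • MIdealExt Y P ψ
        rw [MIdealExt_eq Y P hPcongr (c • ψ)
            (c • (exists_extension_norm_eq Y ψ).choose)
            (fun y => by
              rw [ContinuousLinearMap.smul_apply,
                (exists_extension_norm_eq Y ψ).choose_spec.1 y,
                ContinuousLinearMap.smul_apply]),
          map_smul]
        rfl }
    1
    (fun ψ => by
      rw [one_mul]
      calc ‖MIdealExt Y P ψ‖ ≤ ‖(exists_extension_norm_eq Y ψ).choose‖ := hPle _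
        _ = ‖ψ‖ := (exists_extension_norm_eq Y ψ).choose_spec.2)

theorem MIdealExtL_apply
    (hPcongr : ∀ f g : StrongDual ℝ X, (∀ y ∈ Y, f y = g y) → P f = P g)
    (hPle : ∀ f : StrongDual ℝ X, ‖P f‖ ≤ ‖f‖) (ψ : StrongDual ℝ Y) :
    MIdealExtL Y P hPcongr hPle ψ = MIdealExt Y P ψ := rfl

end Aux


/-- **w\*-w PCs lift through M-ideals.**  Let `Y` be an M-ideal in a Banach space `X`, via a
norm-one projection `P` on `X*` with `ker P = Y^⊥` and `‖f‖ = ‖P f‖ + ‖f - P f‖`.  If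
`x* ∈ S(X*)` lies in the range of `P` (i.e. is the element of `Y* ≅ range P` corresponding
to a functional on `Y`) and its restriction to `Y` is a w\*-w point of continuity of the
unit ball of `Y*`, then `x*` is a w\*-w point of continuity of the unit ball of `X*`. -/


theorem isWStarWPC_of_isWStarWPC_of_MIdeal
    {X : Type*} [NormedAddCommGroup X] [NormedSpace ℝ X] [CompleteSpace X]
    (Y : Submodule ℝ X) (hYc : IsClosed (Y : Set X))
    (P : StrongDual ℝ X →L[ℝ] StrongDual ℝ X)
    (hproj : ∀ f : StrongDual ℝ X, P (P f) = P f)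
    (hker : ∀ f : StrongDual ℝ X, P f = 0 ↔ ∀ y ∈ Y, f y = 0)
    (hL : ∀ f : StrongDual ℝ X, ‖f‖ = ‖P f‖ + ‖f - P f‖)
    (x : StrongDual ℝ X) (hx : ‖x‖ = 1) (hPx : P x = x)
    (hYpc : IsWStarWPC (x.comp Y.subtypeL)) :
    IsWStarWPC x := by
  classical
  intro l hl hbd hw Λ
  -- basic facts about `P`
  have hPle : ∀ f : StrongDual ℝ X, ‖P f‖ ≤ ‖f‖ := by
    intro f
    have h := hL f
    have h0 : (0:ℝ) ≤ ‖f - P f‖ := norm_nonneg _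
    linarith
  have hPy : ∀ (f : StrongDual ℝ X) (y : X), y ∈ Y → P f y = f y := by
    intro f y hy
    have h1 : P (f - P f) = 0 := by rw [map_sub, hproj, sub_self]
    have h2 := (hker _).1 h1 y hy
    have h3 : f y - P f y = 0 := by simpa using h2
    linarith
  have hPcongr : ∀ f g : StrongDual ℝ X, (∀ y ∈ Y, f y = g y) → P f = P g := by
    intro f g h
    have h1 : P (f - g) = 0 := (hker _).2 (by intro y hy; simp [h y hy])
    have h2 : P f - P g = 0 := by rw [← map_sub]; exact h1
    exact sub_eq_zero.mp h2
  have hres : ∀ f : StrongDual ℝ X, ‖f.comp Y.subtypeL‖ ≤ ‖f‖ := by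
    intro f
    refine ContinuousLinearMap.opNorm_le_bound _ (norm_nonneg f) ?_
    intro y
    exact f.le_opNorm (y : X)
  -- `P` has isometric range onto `Y*` via restriction
  have hiso : ∀ f : StrongDual ℝ X, ‖P f‖ = ‖(P f).comp Y.subtypeL‖ := by
    intro f
    refine le_antisymm ?_ (hres _)
    obtain ⟨g, hg1, hg2⟩ := exists_extension_norm_eq Y ((P f).comp Y.subtypeL)
    have hPg : P g = P (P f) := by
      refine hPcongr g (P f) ?_
      intro y hy
      exact hg1 ⟨y, hy⟩
    calc ‖P f‖ = ‖P g‖ := by rw [hPg, hproj]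
      _ ≤ ‖g‖ := hPle g
      _ = _ := hg2
  have hρx : ‖x.comp Y.subtypeL‖ = 1 := by
    have := hiso x
    rw [hPx] at this
    rw [← this, hx]
  -- the `Y^⊥` parts tend to zero in norm
  have hzero : Tendsto (fun φ : StrongDual ℝ X => φ - P φ) l (𝓝 0) := by
    rw [tendsto_zero_iff_norm_tendsto_zero, Metric.tendsto_nhds]
    intro ε hε
    have h1 : 1 - ε/2 < ‖x.comp Y.subtypeL‖ := by rw [hρx]; linarith
    obtain ⟨y, hy1, hy2⟩ := ContinuousLinearMap.exists_lt_apply_of_lt_opNorm _ h1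
    obtain ⟨z, hz1, hz2⟩ : ∃ z : Y, ‖z‖ ≤ 1 ∧ 1 - ε/2 < x (z : X) := by
      rcases le_or_gt 0 ((x.comp Y.subtypeL) y) with h | h
      · refine ⟨y, hy1.le, ?_⟩
        rwa [Real.norm_eq_abs, abs_of_nonneg h] at hy2
      · refine ⟨-y, by simpa using hy1.le, ?_⟩
        rw [Real.norm_eq_abs, abs_of_neg h] at hy2
        simpa using hy2
    have h2 : ∀ᶠ φ in l, 1 - ε < φ (z : X) := by
      have h3 : (1 : ℝ) - ε < x (z : X) := by linarith
      exact (hw (z : X)).eventually (eventually_gt_nhds h3)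
    filter_upwards [hbd, h2] with φ hφ1 hφ2
    rw [Real.dist_eq, sub_zero, abs_of_nonneg (norm_nonneg _)]
    have e1 : ‖φ - P φ‖ = ‖φ‖ - ‖P φ‖ := by have := hL φ; linarith
    have e2 : φ (z : X) ≤ ‖P φ‖ := by
      have h4 := (P φ).le_opNorm (z : X)
      have hz1' : ‖(z : X)‖ ≤ 1 := hz1
      have h5 : ‖P φ‖ * ‖(z : X)‖ ≤ ‖P φ‖ * 1 :=
        mul_le_mul_of_nonneg_left hz1' (norm_nonneg (P φ))
      have h6 : P φ (z : X) = φ (z : X) := hPy φ (z : X) z.2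
      have h7 : φ (z : X) ≤ ‖P φ (z : X)‖ := by rw [h6]; exact le_abs_self _
      linarith
    linarith
  -- the extension operator
  set E : StrongDual ℝ Y →L[ℝ] StrongDual ℝ X := MIdealExtL Y P hPcongr hPle with hE
  have hEP : ∀ f : StrongDual ℝ X, E ((P f).comp Y.subtypeL) = P f := by
    intro f
    rw [hE, MIdealExtL_apply,
      MIdealExt_eq Y P hPcongr ((P f).comp Y.subtypeL) (P f) (fun y => rfl), hproj]
  have hEx : E (x.comp Y.subtypeL) = x := by
    conv_lhs => rw [← hPx]
    rw [hEP, hPx]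
  -- apply the w*-w PC property in Y*
  have hmain : Tendsto (fun φ : StrongDual ℝ X => Λ (P φ)) l (𝓝 (Λ x)) := by
    have happ := hYpc (Filter.map (fun φ : StrongDual ℝ X => (P φ).comp Y.subtypeL) l)
      (hl.map _)
      (by
        rw [Filter.eventually_map]
        filter_upwards [hbd] with φ hφ
        calc ‖(P φ).comp Y.subtypeL‖ = ‖P φ‖ := (hiso φ).symm
          _ ≤ ‖φ‖ := hPle φ
          _ ≤ 1 := hφ)
      (by
        intro v
        rw [tendsto_map'_iff]
        refine (hw (v : X)).congr ?_
        intro φ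
        exact (hPy φ (v : X) v.2).symm)
      (Λ.comp E)
    rw [tendsto_map'_iff] at happ
    have heq2 : (Λ.comp E) (x.comp Y.subtypeL) = Λ x := by
      rw [ContinuousLinearMap.comp_apply, hEx]
    rw [heq2] at happ
    refine happ.congr ?_
    intro φ
    show (Λ.comp E) ((P φ).comp Y.subtypeL) = Λ (P φ)
    rw [ContinuousLinearMap.comp_apply, hEP φ]
  have h2 : Tendsto (fun φ : StrongDual ℝ X => Λ (φ - P φ)) l (𝓝 0) := by
    have h := (Λ.continuous.tendsto 0).comp hzero
    rw [map_zero] at h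
    exact h
  have h3 := hmain.add h2
  rw [add_zero] at h3
  refine h3.congr ?_
  intro φ
  rw [← map_add]
  congr 1
  abel
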